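/- For n = 3, the function H⁽³⁾(τ) = 2√(τ₂² + τ₃²) is convex on Sym(3,ℝ), where τ₁, τ₂, τ₃ are the eigenvalues of τ ordered so that |τ₁| ≤ |τ₂| ≤ |τ₃|. -/

import Mathlib

noncomputable def frob {n : ℕ} (τ : Matrix (Fin n) (Fin n) ℝ) : ℝ :=
  Real.sqrt (∑ i, ∑ j, (τ i j) ^ 2)

/-- `|τ₁|`: the smallest of the absolute values of the eigenvalues of a symmetric `3×3` matrix. -/
noncomputable def t1 (τ : Matrix (Fin 3) (Fin 3) ℝ) : ℝ :=
  if h : τ.IsHermitian then min (min |h.eigenvalues 0| |h.eigenvalues 1|) |h.eigenvalues 2| else 0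

/-- `|τ₃|`: the largest of the absolute values of the eigenvalues. -/
noncomputable def t3 (τ : Matrix (Fin 3) (Fin 3) ℝ) : ℝ :=
  if h : τ.IsHermitian then max (max |h.eigenvalues 0| |h.eigenvalues 1|) |h.eigenvalues 2| else 0

/-- `|τ₂|`: the middle of the absolute values of the eigenvalues. -/
noncomputable def t2 (τ : Matrix (Fin 3) (Fin 3) ℝ) : ℝ :=
  (if h : τ.IsHermitian then |h.eigenvalues 0| + |h.eigenvalues 1| + |h.eigenvalues 2| else 0)
    - t1 τ - t3 τ

/-- `ρ⁽³⁾` as defined in the paper. -/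
noncomputable def rho3 (τ : Matrix (Fin 3) (Fin 3) ℝ) : ℝ :=
  if t1 τ + t2 τ ≤ t3 τ then (1 / 2) * Real.sqrt ((t1 τ + t2 τ) ^ 2 + (t3 τ) ^ 2)
  else (1 / (2 * Real.sqrt 2)) * (t1 τ + t2 τ + t3 τ)

/-- the quasiconvexified integrand `h_λ` for `n = 3`. -/
noncomputable def hlam3 (lam : ℝ) (τ : Matrix (Fin 3) (Fin 3) ℝ) : ℝ :=
  if Real.sqrt lam ≤ rho3 τ then (frob τ) ^ 2 / Real.sqrt lam + Real.sqrt lam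
  else if t1 τ + t2 τ ≤ t3 τ then
    2 * (Real.sqrt ((t1 τ + t2 τ) ^ 2 + (t3 τ) ^ 2) - t1 τ * t2 τ / Real.sqrt lam)
  else Real.sqrt 2 * (t1 τ + t2 τ + t3 τ)
    + ((1 / 2) * (frob τ) ^ 2 - (t1 τ * t2 τ + t1 τ * t3 τ + t2 τ * t3 τ)) / Real.sqrt lam

/-- `H⁽³⁾(τ) = 2√(τ₂² + τ₃²)` where `|τ₁| ≤ |τ₂| ≤ |τ₃|` are the eigenvalues of `τ`
ordered by absolute value. -/
noncomputable def H3 (τ : Matrix (Fin 3) (Fin 3) ℝ) : ℝ :=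
  2 * Real.sqrt ((t2 τ) ^ 2 + (t3 τ) ^ 2)

section Aux
open Matrix RealInnerProductSpace

private lemma perm_sq (a b c : ℝ) :
    (min (min a b) c)^2 + (a + b + c - min (min a b) c - max (max a b) c)^2
      + (max (max a b) c)^2 = a^2+b^2+c^2 := by
  simp only [min_def, max_def]
  split_ifs <;> first | ring1 | nlinarith [sq_nonneg (a-b), sq_nonneg (b-c), sq_nonneg (a-c)]

private lemma pair_coord (v w : Fin 3 → ℝ) (hv : v 0^2+v 1^2+v 2^2 = 1)
    (hw : w 0^2+w 1^2+w 2^2 = 1) (hvw : v 0*w 0+v 1*w 1+v 2*w 2 = 0) :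
    (v 0^2 + w 0^2 ≤ 1) ∧ (v 1^2 + w 1^2 ≤ 1) ∧ (v 2^2 + w 2^2 ≤ 1) := by
  have k0 : 1 - v 0^2 - w 0^2 = (v 1*w 2 - v 2*w 1)^2 := by
    linear_combination (-(w 1^2 + w 2^2)) * hv + (-(1 - v 0^2)) * hw
      + (v 1*w 1 + v 2*w 2 - v 0*w 0) * hvw
  have k1 : 1 - v 1^2 - w 1^2 = (v 0*w 2 - v 2*w 0)^2 := by
    linear_combination (-(w 0^2 + w 2^2)) * hv + (-(1 - v 1^2)) * hw
      + (v 0*w 0 + v 2*w 2 - v 1*w 1) * hvw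
  have k2 : 1 - v 2^2 - w 2^2 = (v 0*w 1 - v 1*w 0)^2 := by
    linear_combination (-(w 0^2 + w 1^2)) * hv + (-(1 - v 2^2)) * hw
      + (v 0*w 0 + v 1*w 1 - v 2*w 2) * hvw
  exact ⟨by nlinarith [sq_nonneg (v 1*w 2 - v 2*w 1)],
    by nlinarith [sq_nonneg (v 0*w 2 - v 2*w 0)],
    by nlinarith [sq_nonneg (v 0*w 1 - v 1*w 0)]⟩

private lemma sqrt_tri (a b c d : ℝ) (ha : 0 ≤ a) (hb : 0 ≤ b) (hc : 0 ≤ c) (hd : 0 ≤ d) :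
    Real.sqrt ((a+c)^2+(b+d)^2) ≤ Real.sqrt (a^2+b^2) + Real.sqrt (c^2+d^2) := by
  have h1 : Real.sqrt (a^2+b^2)^2 = a^2+b^2 := Real.sq_sqrt (by positivity)
  have h2 : Real.sqrt (c^2+d^2)^2 = c^2+d^2 := Real.sq_sqrt (by positivity)
  have hcs : a*c + b*d ≤ Real.sqrt (a^2+b^2) * Real.sqrt (c^2+d^2) := by
    rw [← Real.sqrt_mul (by positivity)]
    rw [show (a^2+b^2)*(c^2+d^2) = (a*c+b*d)^2 + (a*d-b*c)^2 by ring]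
    calc a*c+b*d ≤ |a*c+b*d| := le_abs_self _
      _ = Real.sqrt ((a*c+b*d)^2) := (Real.sqrt_sq_eq_abs _).symm
      _ ≤ _ := Real.sqrt_le_sqrt (by nlinarith [sq_nonneg (a*d-b*c)])
  have key : (a+c)^2+(b+d)^2 ≤ (Real.sqrt (a^2+b^2) + Real.sqrt (c^2+d^2))^2 := by nlinarith
  calc Real.sqrt ((a+c)^2+(b+d)^2)
      ≤ Real.sqrt ((Real.sqrt (a^2+b^2) + Real.sqrt (c^2+d^2))^2) := Real.sqrt_le_sqrt key
    _ = _ := Real.sqrt_sq (by positivity)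

private lemma norm_tri (x x' y y' : EuclideanSpace ℝ (Fin 3)) :
    Real.sqrt (‖x+x'‖^2+‖y+y'‖^2) ≤ Real.sqrt (‖x‖^2+‖y‖^2) + Real.sqrt (‖x'‖^2+‖y'‖^2) := by
  refine le_trans (Real.sqrt_le_sqrt ?_)
    (sqrt_tri ‖x‖ ‖y‖ ‖x'‖ ‖y'‖ (norm_nonneg _) (norm_nonneg _) (norm_nonneg _) (norm_nonneg _))
  have h1 := norm_add_le x x'
  have h2 := norm_add_le y y'
  nlinarith [norm_nonneg (x+x'), norm_nonneg (y+y'), norm_nonneg x, norm_nonneg x',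
    norm_nonneg y, norm_nonneg y']

private lemma norm_smul_sqrt (t : ℝ) (x y : EuclideanSpace ℝ (Fin 3)) (ht : 0 ≤ t) :
    Real.sqrt (‖t • x‖^2+‖t • y‖^2) = t * Real.sqrt (‖x‖^2+‖y‖^2) := by
  have h : ‖t • x‖^2+‖t • y‖^2 = t^2 * (‖x‖^2+‖y‖^2) := by
    rw [norm_smul, norm_smul]; simp only [Real.norm_eq_abs, mul_pow, sq_abs]; ring
  rw [h, Real.sqrt_mul (sq_nonneg t), Real.sqrt_sq ht]

set_option maxHeartbeats 1000000 in
private lemma key_ub (A : Matrix (Fin 3) (Fin 3) ℝ) (hA : A.IsHermitian)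
    (v w : EuclideanSpace ℝ (Fin 3)) (hv : ‖v‖ = 1) (hw : ‖w‖ = 1) (hvw : ⟪v, w⟫ = 0) :
    ‖Matrix.toEuclideanLin A v‖^2 + ‖Matrix.toEuclideanLin A w‖^2 ≤ (t2 A)^2 + (t3 A)^2 := by
  have heig : ∀ j, Matrix.toEuclideanLin A (hA.eigenvectorBasis j)
      = hA.eigenvalues j • hA.eigenvectorBasis j := fun j =>
    congrArg (WithLp.equiv 2 _).symm (hA.mulVec_eigenvectorBasis j)
  set b := hA.eigenvectorBasis with hb
  set lam := hA.eigenvalues with hlam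
  have hsymm := Matrix.isHermitian_iff_isSymmetric.mp hA
  have hrep : ∀ (x : EuclideanSpace ℝ (Fin 3)) (i : Fin 3),
      b.repr (Matrix.toEuclideanLin A x) i = lam i * b.repr x i := by
    intro x i
    rw [b.repr_apply_apply, b.repr_apply_apply, ← hsymm (b i) x, heig i, real_inner_smul_left]
  have hns : ∀ x : EuclideanSpace ℝ (Fin 3), ‖x‖^2 = ∑ i, (b.repr x i)^2 := by
    intro x
    rw [← b.repr.norm_map x, EuclideanSpace.norm_eq, Real.sq_sqrt (by positivity)]
    simp [sq_abs]
  have hnsA : ∀ x : EuclideanSpace ℝ (Fin 3),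
      ‖Matrix.toEuclideanLin A x‖^2 = ∑ i, (lam i)^2 * (b.repr x i)^2 := by
    intro x
    rw [hns]
    refine Finset.sum_congr rfl fun i _ => ?_
    rw [hrep]; ring
  have hc : (b.repr v 0)^2 + (b.repr v 1)^2 + (b.repr v 2)^2 = 1 := by
    have := hns v
    rw [hv] at this
    simpa [Fin.sum_univ_three] using this.symm
  have hd : (b.repr w 0)^2 + (b.repr w 1)^2 + (b.repr w 2)^2 = 1 := by
    have := hns w
    rw [hw] at this
    simpa [Fin.sum_univ_three] using this.symm
  have hcd : (b.repr v 0)*(b.repr w 0) + (b.repr v 1)*(b.repr w 1)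
      + (b.repr v 2)*(b.repr w 2) = 0 := by
    have h1 := b.repr.inner_map_map v w
    rw [hvw] at h1
    simp only [PiLp.inner_apply, RCLike.inner_apply, conj_trivial, Fin.sum_univ_three] at h1
    linear_combination h1
  obtain ⟨p0, p1, p2⟩ := pair_coord (fun i => b.repr v i) (fun i => b.repr w i) hc hd hcd
  rw [hnsA, hnsA]
  simp only [t2, t3, t1, dif_pos hA, ← hlam]
  have hperm := perm_sq |lam 0| |lam 1| |lam 2|
  set m := min (min |lam 0| |lam 1|) |lam 2| with hm
  have hm0 : (0:ℝ) ≤ m := le_min (le_min (abs_nonneg _) (abs_nonneg _)) (abs_nonneg _)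
  have hma : m ≤ |lam 0| := le_trans (min_le_left _ _) (min_le_left _ _)
  have hmb : m ≤ |lam 1| := le_trans (min_le_left _ _) (min_le_right _ _)
  have hmc : m ≤ |lam 2| := min_le_right _ _
  have q0 : m^2 ≤ |lam 0|^2 := by nlinarith
  have q1 : m^2 ≤ |lam 1|^2 := by nlinarith
  have q2 : m^2 ≤ |lam 2|^2 := by nlinarith
  have e0 : |lam 0|^2 = (lam 0)^2 := sq_abs _
  have e1 : |lam 1|^2 = (lam 1)^2 := sq_abs _
  have e2 : |lam 2|^2 = (lam 2)^2 := sq_abs _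
  simp only [Fin.sum_univ_three]
  nlinarith [mul_nonneg (sub_nonneg.2 q0) (sub_nonneg.2 p0),
    mul_nonneg (sub_nonneg.2 q1) (sub_nonneg.2 p1),
    mul_nonneg (sub_nonneg.2 q2) (sub_nonneg.2 p2)]

set_option maxHeartbeats 1000000 in
private lemma key_attain (τ : Matrix (Fin 3) (Fin 3) ℝ) (hτ : τ.IsHermitian) :
    ∃ v w : EuclideanSpace ℝ (Fin 3), ‖v‖ = 1 ∧ ‖w‖ = 1 ∧ ⟪v, w⟫ = 0 ∧
      (t2 τ)^2 + (t3 τ)^2 ≤ ‖Matrix.toEuclideanLin τ v‖^2 + ‖Matrix.toEuclideanLin τ w‖^2 := by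
  have heig : ∀ j, Matrix.toEuclideanLin τ (hτ.eigenvectorBasis j)
      = hτ.eigenvalues j • hτ.eigenvectorBasis j := fun j =>
    congrArg (WithLp.equiv 2 _).symm (hτ.mulVec_eigenvectorBasis j)
  set b := hτ.eigenvectorBasis with hb
  set lam := hτ.eigenvalues with hlam
  have hn : ∀ j, ‖b j‖ = 1 := fun j => b.orthonormal.1 j
  have ho : ∀ i j, i ≠ j → ⟪b i, b j⟫ = 0 := fun i j h => b.orthonormal.2 h
  have hT : ∀ j, ‖Matrix.toEuclideanLin τ (b j)‖^2 = (lam j)^2 := by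
    intro j
    rw [heig j, norm_smul, hn j, mul_one, Real.norm_eq_abs, sq_abs]
  simp only [t2, t3, t1, dif_pos hτ, ← hlam]
  have hperm := perm_sq |lam 0| |lam 1| |lam 2|
  set m := min (min |lam 0| |lam 1|) |lam 2| with hm
  have e0 : |lam 0|^2 = (lam 0)^2 := sq_abs _
  have e1 : |lam 1|^2 = (lam 1)^2 := sq_abs _
  have e2 : |lam 2|^2 = (lam 2)^2 := sq_abs _
  have hcase : m = |lam 0| ∨ m = |lam 1| ∨ m = |lam 2| := by
    rw [hm]
    rcases min_cases (min |lam 0| |lam 1|) |lam 2| with ⟨h, -⟩ | ⟨h, -⟩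
    · rcases min_cases |lam 0| |lam 1| with ⟨h', -⟩ | ⟨h', -⟩ <;> rw [h, h'] <;> tauto
    · rw [h]; tauto
  rcases hcase with h | h | h
  · refine ⟨b 1, b 2, hn 1, hn 2, ho 1 2 (by decide), ?_⟩
    rw [hT 1, hT 2]
    have h2 : m^2 = |lam 0|^2 := by rw [h]
    linarith [hperm, e1, e2]
  · refine ⟨b 0, b 2, hn 0, hn 2, ho 0 2 (by decide), ?_⟩
    rw [hT 0, hT 2]
    have h2 : m^2 = |lam 1|^2 := by rw [h]
    linarith [hperm, e0, e2]
  · refine ⟨b 0, b 1, hn 0, hn 1, ho 0 1 (by decide), ?_⟩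
    rw [hT 0, hT 1]
    have h2 : m^2 = |lam 2|^2 := by rw [h]
    linarith [hperm, e0, e1]

end Aux

open Matrix RealInnerProductSpace in
set_option maxHeartbeats 1000000 in
/-- `H⁽³⁾` is convex on the symmetric `3×3` matrices. -/
theorem H3_convex (A B : Matrix (Fin 3) (Fin 3) ℝ) (hA : A.IsHermitian)
    (hB : B.IsHermitian) (t : ℝ) (ht0 : 0 ≤ t) (ht1 : t ≤ 1) :
    H3 (t • A + (1 - t) • B) ≤ t * H3 A + (1 - t) * H3 B := by
  have hsA : (t • A).IsHermitian := by
    unfold Matrix.IsHermitian at *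
    rw [Matrix.conjTranspose_smul, hA]
    simp
  have hsB : ((1 - t) • B).IsHermitian := by
    unfold Matrix.IsHermitian at *
    rw [Matrix.conjTranspose_smul, hB]
    simp
  have hτ : (t • A + (1 - t) • B).IsHermitian := hsA.add hsB
  obtain ⟨v, w, hv, hw, hvw, hge⟩ := key_attain _ hτ
  have hsplit : ∀ x : EuclideanSpace ℝ (Fin 3),
      Matrix.toEuclideanLin (t • A + (1 - t) • B) x
        = t • Matrix.toEuclideanLin A x + (1 - t) • Matrix.toEuclideanLin B x := by
    intro x
    simp [map_add, _root_.map_smul]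
  have c1 : Real.sqrt ((t2 (t • A + (1 - t) • B))^2 + (t3 (t • A + (1 - t) • B))^2)
      ≤ Real.sqrt (‖Matrix.toEuclideanLin (t • A + (1 - t) • B) v‖^2
        + ‖Matrix.toEuclideanLin (t • A + (1 - t) • B) w‖^2) := Real.sqrt_le_sqrt hge
  have c2 : Real.sqrt (‖Matrix.toEuclideanLin (t • A + (1 - t) • B) v‖^2
        + ‖Matrix.toEuclideanLin (t • A + (1 - t) • B) w‖^2)
      ≤ t * Real.sqrt (‖Matrix.toEuclideanLin A v‖^2 + ‖Matrix.toEuclideanLin A w‖^2)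
        + (1 - t) * Real.sqrt (‖Matrix.toEuclideanLin B v‖^2 + ‖Matrix.toEuclideanLin B w‖^2) := by
    rw [hsplit v, hsplit w]
    calc Real.sqrt (‖t • Matrix.toEuclideanLin A v + (1 - t) • Matrix.toEuclideanLin B v‖^2
          + ‖t • Matrix.toEuclideanLin A w + (1 - t) • Matrix.toEuclideanLin B w‖^2)
        ≤ Real.sqrt (‖t • Matrix.toEuclideanLin A v‖^2 + ‖t • Matrix.toEuclideanLin A w‖^2)
          + Real.sqrt (‖(1 - t) • Matrix.toEuclideanLin B v‖^2
            + ‖(1 - t) • Matrix.toEuclideanLin B w‖^2) := norm_tri _ _ _ _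
      _ = _ := by
          rw [norm_smul_sqrt t _ _ ht0, norm_smul_sqrt (1 - t) _ _ (by linarith)]
  have c3 : Real.sqrt (‖Matrix.toEuclideanLin A v‖^2 + ‖Matrix.toEuclideanLin A w‖^2)
      ≤ Real.sqrt ((t2 A)^2 + (t3 A)^2) := Real.sqrt_le_sqrt (key_ub A hA v w hv hw hvw)
  have c4 : Real.sqrt (‖Matrix.toEuclideanLin B v‖^2 + ‖Matrix.toEuclideanLin B w‖^2)
      ≤ Real.sqrt ((t2 B)^2 + (t3 B)^2) := Real.sqrt_le_sqrt (key_ub B hB v w hv hw hvw)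
  have c5 := mul_le_mul_of_nonneg_left c3 ht0
  have c6 := mul_le_mul_of_nonneg_left c4 (by linarith : (0:ℝ) ≤ 1 - t)
  simp only [H3]
  nlinarith [c1, c2, c5, c6]
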